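/- Let U be a zero-mean real random variable with variance s > 0 and m.g.f. finite near 0, and let I_L(d) = sup_{θ≥0}(θd − log E[e^{−θU}]) denote the left rate function. Then lim_{d→0⁺} I_L(d)/d² = 1/(2s), i.e., the left and right rate functions have the same quadratic behavior near 0. -/

import Mathlib

open MeasureTheory ProbabilityTheory Real Set Filter

lemma lem_cube_le_exp (t : ℝ) (ht : 0 ≤ t) : t ^ 3 ≤ 27 * Real.exp t := by
  have h1 : t / 3 ≤ Real.exp (t / 3) := (Real.add_one_le_exp (t/3)).trans' (by linarith)
  have h2 : (t / 3) ^ 3 ≤ (Real.exp (t / 3)) ^ 3 := pow_le_pow_left₀ (by positivity) h1 3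
  have h3 : (Real.exp (t / 3)) ^ 3 = Real.exp t := by
    rw [← Real.exp_nat_mul]; ring_nf
  nlinarith [h2, h3]

lemma lem_exp_cube (x : ℝ) : |Real.exp x - (1 + x + x ^ 2 / 2)| ≤ 4 * |x| ^ 3 * Real.exp |x| := by
  rcases le_or_gt |x| 1 with h | h
  · have hb := Real.exp_bound h (n := 3) (by norm_num)
    have hsum : ∑ i ∈ Finset.range 3, x ^ i / (Nat.factorial i) = 1 + x + x ^ 2 / 2 := by
      norm_num [Finset.sum_range_succ, Nat.factorial]
    rw [hsum] at hb
    have h3 : (1 : ℝ) ≤ Real.exp |x| := Real.one_le_exp (abs_nonneg x)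
    have h4 : (0:ℝ) ≤ |x| ^ 3 := by positivity
    have h5 : (|x| ^ 3 * ((3:ℕ).succ / ((Nat.factorial 3) * 3)) : ℝ) ≤ 4 * |x| ^ 3 * Real.exp |x| := by
      have : (((3:ℕ).succ : ℝ) / (((Nat.factorial 3) : ℝ) * 3)) = 2/9 := by
        norm_num [Nat.factorial]
      rw [this]; nlinarith
    exact hb.trans h5
  · have h1 : (1:ℝ) ≤ |x| ^ 3 := one_le_pow₀ h.le
    have h0 : (1:ℝ) ≤ |x| ^ 2 := one_le_pow₀ h.le
    have h2 : |x| ≤ |x| ^ 3 := by nlinarith [abs_nonneg x]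
    have h3 : x ^ 2 ≤ |x| ^ 3 := by nlinarith [abs_nonneg x, sq_abs x]
    have h4 : Real.exp x ≤ Real.exp |x| := Real.exp_le_exp.2 (le_abs_self x)
    have h5 : (0:ℝ) < Real.exp |x| := Real.exp_pos _
    have h6 : (1:ℝ) ≤ Real.exp |x| := Real.one_le_exp (abs_nonneg x)
    rw [abs_sub_le_iff]
    constructor
    · have h8 : -(1 + |x| + x^2/2) ≤ 1 + x + x^2/2 := by
        have := neg_abs_le x; nlinarith [sq_nonneg x]
      nlinarith
    · have h8 : 1 + x + x^2/2 ≤ 1 + |x| + x^2/2 := by linarith [le_abs_self x]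
      have h9 : (0:ℝ) < Real.exp x := Real.exp_pos _
      nlinarith

set_option maxHeartbeats 2000000 in
theorem stmt4
    {Ω : Type*} [MeasurableSpace Ω] (μ : Measure Ω) [IsProbabilityMeasure μ]
    (U : Ω → ℝ) (hUmeas : Measurable U) (hUint : Integrable U μ)
    (hmean : ∫ ω, U ω ∂μ = 0)
    (s : ℝ) (hs : ∫ ω, (U ω) ^ 2 ∂μ = s) (hs0 : 0 < s)
    (hsqint : Integrable (fun ω => (U ω) ^ 2) μ)
    (ε : ℝ) (hε : 0 < ε)
    (hfin : ∀ θ : ℝ, |θ| < ε → Integrable (fun ω => Real.exp (θ * U ω)) μ)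
    (hC2 : ContDiffOn ℝ 2 (fun θ => mgf U μ θ) (Set.Ioo (-ε) ε))
    (IL : ℝ → ℝ)
    (hIL : ∀ d : ℝ, IL d = sSup {x : ℝ | ∃ θ : ℝ, 0 ≤ θ ∧
      Integrable (fun ω => Real.exp (-θ * U ω)) μ ∧
      x = θ * d - Real.log (∫ ω, Real.exp (-θ * U ω) ∂μ)}) :
    Tendsto (fun d : ℝ => IL d / d ^ 2) (nhdsWithin 0 (Set.Ioi 0))
      (nhds (1 / (2 * s))) := by
  set g : ℝ → ℝ := fun θ => ∫ ω, Real.exp (-θ * U ω) ∂μ with hgdef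
  set S : ℝ → Set ℝ := fun d => {x : ℝ | ∃ θ : ℝ, 0 ≤ θ ∧
      Integrable (fun ω => Real.exp (-θ * U ω)) μ ∧
      x = θ * d - Real.log (∫ ω, Real.exp (-θ * U ω) ∂μ)} with hSdef
  -- basic integrability
  have hg_int : ∀ θ : ℝ, |θ| < ε → Integrable (fun ω => Real.exp (-θ * U ω)) μ := by
    intro θ hθ
    have := hfin (-θ) (by simpa using hθ)
    simpa using this
  have habs_int : ∀ c : ℝ, |c| < ε → Integrable (fun ω => Real.exp (c * |U ω|)) μ := by
    intro c hc
    have hac : |(|c|)| < ε := by simpa using hc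
    have hac' : |(-|c|)| < ε := by simpa using hc
    have h1 : Integrable (fun ω => Real.exp (|c| * U ω) + Real.exp (-|c| * U ω)) μ :=
      (hfin _ hac).add (hfin _ hac')
    refine h1.mono' ((Measurable.exp (hUmeas.abs.const_mul c)).aestronglyMeasurable) ?_
    filter_upwards with ω
    rw [Real.norm_eq_abs, Real.abs_exp]
    have h2 : Real.exp (c * |U ω|) ≤ Real.exp (|c| * |U ω|) :=
      Real.exp_le_exp.2 (mul_le_mul_of_nonneg_right (le_abs_self c) (abs_nonneg _))
    refine h2.trans ?_
    rcases abs_cases (U ω) with ⟨h, _⟩ | ⟨h, _⟩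
    · rw [h]; exact le_add_of_nonneg_right (Real.exp_pos _).le
    · rw [h, show |c| * -U ω = -|c| * U ω by ring]
      exact le_add_of_nonneg_left (Real.exp_pos _).le
  -- key limit for (g θ - 1)/θ²
  have hq : Tendsto (fun θ => (g θ - 1) / θ ^ 2) (nhdsWithin (0:ℝ) {0}ᶜ) (nhds (s/2)) := by
    have hε3 : 0 < ε/3 := by linarith
    set l := nhdsWithin (0:ℝ) {0}ᶜ with hl
    set F : ℝ → Ω → ℝ := fun θ ω => (Real.exp (-θ * U ω) - 1 + θ * U ω) / θ^2 with hF
    set bound : Ω → ℝ := fun ω =>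
      U ω^2/2 + (972/ε^2) * Real.exp ((2*ε/3) * |U ω|) with hbound
    have hne : ∀ᶠ θ in l, θ ≠ 0 := eventually_mem_nhdsWithin
    have h5 : ∀ᶠ θ in l, |θ| < ε/3 := by
      have : ∀ᶠ θ in nhds (0:ℝ), |θ| < ε/3 := by
        have := Metric.ball_mem_nhds (0:ℝ) hε3
        filter_upwards [this] with x hx
        simpa [Real.dist_eq] using hx
      exact this.filter_mono nhdsWithin_le_nhds
    -- pointwise estimate
    have hest : ∀ θ : ℝ, θ ≠ 0 → ∀ ω, |F θ ω - U ω^2/2| ≤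
        4* |θ| * |U ω|^3 * Real.exp (|θ| * |U ω|) := by
      intro θ hθ ω
      have h0 : (0:ℝ) < θ^2 := by positivity
      have h1 := lem_exp_cube (-θ * U ω)
      have h3 : |(-θ * U ω)| = |θ| * |U ω| := by rw [abs_mul, abs_neg]
      rw [h3] at h1
      have h2 : F θ ω - U ω^2/2 =
          (Real.exp (-θ*U ω) - (1 + (-θ*U ω) + (-θ*U ω)^2/2)) / θ^2 := by
        rw [hF]; field_simp; ring
      rw [h2, abs_div, abs_of_pos h0, div_le_iff₀ h0]
      refine h1.trans (le_of_eq ?_)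
      rw [mul_pow, show |θ|^3 = θ^2 * |θ| by rw [pow_succ, sq_abs]]
      ring
    have hbd_int : Integrable bound μ := by
      refine (hsqint.div_const 2).add (Integrable.const_mul ?_ _)
      exact habs_int (2*ε/3) (by rw [abs_of_pos (by linarith)]; linarith)
    have hs2 : ∫ ω, U ω^2/2 ∂μ = s/2 := by
      rw [integral_div, hs]
    have htend : Tendsto (fun θ => ∫ ω, F θ ω ∂μ) l (nhds (s/2)) := by
      rw [← hs2]
      refine tendsto_integral_filter_of_dominated_convergence bound ?_ ?_ hbd_int ?_
      · filter_upwards with θ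
        exact ((((hUmeas.const_mul (-θ)).exp.sub measurable_const).add
          (hUmeas.const_mul θ)).div_const _).aestronglyMeasurable
      · filter_upwards [h5, hne] with θ hθ hθ0
        refine ae_of_all _ fun ω => ?_
        have e1 : |F θ ω - U ω^2/2| ≤ 4* |θ| * |U ω|^3 * Real.exp (|θ| * |U ω|) :=
          hest θ hθ0 ω
        have e2 : 4* |θ| * |U ω|^3 * Real.exp (|θ| * |U ω|) ≤
            4*(ε/3)* |U ω|^3 * Real.exp ((ε/3) * |U ω|) := by
          gcongr <;> exact hθ.le
        have e3 : |U ω|^3 ≤ 27/(ε/3)^3 * Real.exp ((ε/3) * |U ω|) := by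
          have := lem_cube_le_exp ((ε/3) * |U ω|) (by positivity)
          rw [mul_pow] at this
          rw [div_mul_eq_mul_div, le_div_iff₀ (by positivity)]
          nlinarith
        have e4 : 4*(ε/3)* |U ω|^3 * Real.exp ((ε/3) * |U ω|) ≤
            (972/ε^2) * Real.exp ((2*ε/3) * |U ω|) := by
          have e41 : Real.exp ((ε/3) * |U ω|) * Real.exp ((ε/3) * |U ω|) =
              Real.exp ((2*ε/3) * |U ω|) := by
            rw [← Real.exp_add]; ring_nf
          have e42 := mul_le_mul_of_nonneg_right e3 (Real.exp_pos ((ε/3) * |U ω|)).le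
          calc 4*(ε/3)* |U ω|^3 * Real.exp ((ε/3) * |U ω|)
              ≤ 4*(ε/3)*(27/(ε/3)^3 * Real.exp ((ε/3) * |U ω|)) * Real.exp ((ε/3) * |U ω|) := by
                nlinarith [Real.exp_pos ((ε/3) * |U ω|)]
            _ = 4*(ε/3)*(27/(ε/3)^3) * (Real.exp ((ε/3) * |U ω|) * Real.exp ((ε/3) * |U ω|)) := by
                ring
            _ = (972/ε^2) * Real.exp ((2*ε/3) * |U ω|) := by
                rw [e41]; field_simp; ring
        have e5 : ‖F θ ω‖ ≤ |F θ ω - U ω^2/2| + U ω^2/2 := by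
          rw [Real.norm_eq_abs]
          have := abs_sub_abs_le_abs_sub (F θ ω) (U ω^2/2)
          have h7 : |U ω^2/2| = U ω^2/2 := abs_of_nonneg (by positivity)
          linarith [le_abs_self (F θ ω), abs_nonneg (F θ ω)]
        calc ‖F θ ω‖ ≤ |F θ ω - U ω^2/2| + U ω^2/2 := e5
          _ ≤ (972/ε^2) * Real.exp ((2*ε/3) * |U ω|) + U ω^2/2 := by
              linarith [e1.trans (e2.trans e4)]
          _ = bound ω := by rw [hbound]; ring
      · refine ae_of_all _ fun ω => ?_
        rw [← tendsto_sub_nhds_zero_iff]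
        have hb : ∀ᶠ θ in l, ‖F θ ω - U ω^2/2‖ ≤
            4 * |θ| * |U ω|^3 * Real.exp (|θ| * |U ω|) := by
          filter_upwards [hne] with θ hθ0
          rw [Real.norm_eq_abs]; exact hest θ hθ0 ω
        have hc : Tendsto (fun θ : ℝ => 4 * |θ| * |U ω|^3 * Real.exp (|θ| * |U ω|))
            l (nhds 0) := by
          have hc0 : Continuous (fun θ : ℝ =>
              4 * |θ| * |U ω|^3 * Real.exp (|θ| * |U ω|)) := by fun_prop
          have h1 := (hc0.tendsto 0).mono_left (nhdsWithin_le_nhds (s := {0}ᶜ))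
          simpa using h1
        exact squeeze_zero_norm' hb hc
    refine htend.congr' ?_
    filter_upwards [h5, hne] with θ hθ hθ0
    have hθε : |θ| < ε := by linarith
    have hint1 : Integrable (fun ω => Real.exp (-θ * U ω) - 1) μ :=
      (hg_int θ hθε).sub (integrable_const 1)
    have : ∫ ω, F θ ω ∂μ = (∫ ω, (Real.exp (-θ * U ω) - 1 + θ * U ω) ∂μ) / θ^2 := by
      rw [hF]; exact integral_div _ _
    rw [this, integral_add hint1 (hUint.const_mul θ),
      integral_sub (hg_int θ hθε) (integrable_const 1), integral_const_mul, hmean,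
      integral_const, probReal_univ, mul_zero, smul_eq_mul, one_mul, add_zero]
  have hg1 : ∀ θ : ℝ, Integrable (fun ω => Real.exp (-θ * U ω)) μ → 1 ≤ g θ := by
    intro θ hθ
    have h1 : ∀ ω, 1 + (-θ) * U ω ≤ Real.exp (-θ * U ω) := fun ω => by
      have := Real.add_one_le_exp (-θ * U ω); linarith
    have h2 : Integrable (fun ω => 1 + (-θ) * U ω) μ :=
      (integrable_const 1).add (hUint.const_mul _)
    have h3 : ∫ ω, (1 + (-θ) * U ω) ∂μ ≤ g θ := integral_mono h2 hθ h1
    rwa [integral_add (integrable_const _) (hUint.const_mul _), integral_const_mul, hmean,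
      integral_const, probReal_univ, mul_zero, smul_eq_mul, one_mul,
      add_zero] at h3
  have hgpos : ∀ θ : ℝ, Integrable (fun ω => Real.exp (-θ * U ω)) μ → 0 < g θ :=
    fun θ hθ => lt_of_lt_of_le one_pos (hg1 θ hθ)
  have hL : Tendsto (fun θ => Real.log (g θ) / θ ^ 2) (nhdsWithin (0:ℝ) (Set.Ioi 0)) (nhds (s/2)) := by
    have hmono : nhdsWithin (0:ℝ) (Set.Ioi 0) ≤ nhdsWithin (0:ℝ) {0}ᶜ :=
      nhdsWithin_mono 0 (fun x hx => ne_of_gt hx)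
    have hq' : Tendsto (fun θ => (g θ - 1)/θ^2) (nhdsWithin (0:ℝ) (Set.Ioi 0)) (nhds (s/2)) :=
      hq.mono_left hmono
    have hθ2 : Tendsto (fun θ : ℝ => θ^2) (nhdsWithin (0:ℝ) (Set.Ioi 0)) (nhds 0) := by
      have := ((continuous_pow 2).tendsto (0:ℝ)).mono_left
        (nhdsWithin_le_nhds (s := Set.Ioi 0))
      simpa using this
    have hgto1 : Tendsto g (nhdsWithin (0:ℝ) (Set.Ioi 0)) (nhds 1) := by
      have h1 := tendsto_const_nhds (x := (1:ℝ))
        (f := nhdsWithin (0:ℝ) (Set.Ioi 0)) |>.add (hθ2.mul hq')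
      have h2 : ∀ᶠ θ in nhdsWithin (0:ℝ) (Set.Ioi 0),
          1 + θ^2*((g θ - 1)/θ^2) = g θ := by
        filter_upwards [self_mem_nhdsWithin] with θ hθ
        have hθ0 : (θ:ℝ) ≠ 0 := ne_of_gt hθ
        field_simp
        ring
      simpa using h1.congr' h2
    have hinv : Tendsto (fun θ => (g θ - 1)/θ^2 * (1 / g θ))
        (nhdsWithin (0:ℝ) (Set.Ioi 0)) (nhds (s/2)) := by
      have hdiv : Tendsto (fun θ => 1 / g θ) (nhdsWithin (0:ℝ) (Set.Ioi 0)) (nhds (1/1)) :=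
        Tendsto.div (tendsto_const_nhds (x := (1:ℝ))) hgto1 one_ne_zero
      have := hq'.mul hdiv
      simpa using this
    have hev : ∀ᶠ θ in nhdsWithin (0:ℝ) (Set.Ioi 0), θ ∈ Set.Ioo (0:ℝ) ε :=
      Ioo_mem_nhdsGT_of_mem ⟨le_refl 0, hε⟩
    refine tendsto_of_tendsto_of_tendsto_of_le_of_le' hinv hq' ?_ ?_
    · filter_upwards [hev] with θ hθ
      have hθε : |θ| < ε := by rw [abs_of_pos hθ.1]; exact hθ.2
      have hgp : 0 < g θ := hgpos θ (hg_int θ hθε)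
      have hθ2p : (0:ℝ) < θ^2 := pow_pos hθ.1 2
      have hlog : (g θ - 1)/ g θ ≤ Real.log (g θ) := by
        have h1 := Real.log_le_sub_one_of_pos (x := 1 / g θ) (by positivity)
        rw [Real.log_div one_ne_zero (ne_of_gt hgp), Real.log_one] at h1
        have h2 : 1 - 1/(g θ) ≤ Real.log (g θ) := by linarith
        calc (g θ - 1)/g θ = 1 - 1/(g θ) := by field_simp
          _ ≤ _ := h2
      calc (g θ - 1)/θ^2 * (1/g θ) = ((g θ - 1)/g θ) / θ^2 := by ring
        _ ≤ Real.log (g θ) / θ^2 := by gcongr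
    · filter_upwards [hev] with θ hθ
      have hθε : |θ| < ε := by rw [abs_of_pos hθ.1]; exact hθ.2
      have hgp : 0 < g θ := hgpos θ (hg_int θ hθε)
      have hlog := Real.log_le_sub_one_of_pos hgp
      have hθ2p : (0:ℝ) < θ^2 := pow_pos hθ.1 2
      gcongr
  have hLya : ∀ a b : ℝ, 0 < a → a ≤ b →
      Integrable (fun ω => Real.exp (-b * U ω)) μ →
      Integrable (fun ω => Real.exp (-a * U ω)) μ →
      (b/a) * Real.log (g a) ≤ Real.log (g b) := by
    intro a b ha hab hintb hinta
    have hb0 : 0 < b := lt_of_lt_of_le ha hab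
    have hga : 0 < g a := hgpos a hinta
    have hgb : 0 < g b := hgpos b hintb
    set f : Ω → ℝ := fun ω => Real.exp (-a * U ω) with hf
    have hq1 : (1:ℝ) ≤ b / a := (one_le_div ha).2 hab
    have hfm : AEStronglyMeasurable f μ := ((hUmeas.const_mul (-a)).exp).aestronglyMeasurable
    have hsn := eLpNorm'_le_eLpNorm'_of_exponent_le (p := 1) (q := b/a) one_pos hq1 μ hfm
    have hside1 : eLpNorm' f 1 μ = ENNReal.ofReal (g a) := by
      have hpt : ∀ ω, ‖f ω‖ₑ ^ (1:ℝ) = ENNReal.ofReal (f ω) := fun ω => by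
        rw [ENNReal.rpow_one, Real.enorm_eq_ofReal (Real.exp_pos _).le]
      rw [eLpNorm', lintegral_congr hpt,
        ← MeasureTheory.ofReal_integral_eq_lintegral_ofReal hinta
          (ae_of_all _ fun ω => (Real.exp_pos _).le), one_div_one, ENNReal.rpow_one]
    have hside2 : eLpNorm' f (b/a) μ = (ENNReal.ofReal (g b)) ^ (a/b) := by
      have hpt : ∀ ω, ‖f ω‖ₑ ^ (b/a) = ENNReal.ofReal (Real.exp (-b * U ω)) := by
        intro ω
        have h1 : (f ω) ^ (b/a) = Real.exp (-b * U ω) := by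
          rw [hf]
          rw [← Real.exp_mul]
          congr 1
          field_simp
        rw [Real.enorm_eq_ofReal (Real.exp_pos _).le,
          ENNReal.ofReal_rpow_of_pos (Real.exp_pos _), h1]
      rw [eLpNorm', lintegral_congr hpt,
        ← MeasureTheory.ofReal_integral_eq_lintegral_ofReal hintb
          (ae_of_all _ fun ω => (Real.exp_pos _).le), one_div_div]
    rw [hside1, hside2] at hsn
    have hsn2 : g a ≤ (g b) ^ (a/b) := by
      rw [ENNReal.ofReal_rpow_of_pos hgb] at hsn
      exact (ENNReal.ofReal_le_ofReal_iff (by positivity)).1 hsn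
    have hloga : Real.log (g a) ≤ (a/b) * Real.log (g b) := by
      have := Real.log_le_log hga hsn2
      rwa [Real.log_rpow hgb] at this
    have h2 := mul_le_mul_of_nonneg_left hloga (le_of_lt (div_pos hb0 ha))
    calc (b/a) * Real.log (g a) ≤ (b/a) * ((a/b) * Real.log (g b)) := h2
      _ = Real.log (g b) := by field_simp
  have hg0 : g 0 = 1 := by
    simp [hgdef]
  have hS0 : ∀ d : ℝ, (0:ℝ) ∈ S d := by
    intro d
    refine ⟨0, le_refl 0, by simpa using (integrable_const (1:ℝ)), ?_⟩
    rw [show (fun ω => Real.exp (-(0:ℝ) * U ω)) = fun _ => (1:ℝ) by funext ω; simp]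
    simp
  -- key upper bound construction
  have hkey : ∀ η : ℝ, 0 < η → η < s/4 → ∀ᶠ d in nhdsWithin (0:ℝ) (Set.Ioi 0),
      (0 < d ∧ BddAbove (S d) ∧ IL d ≤ d^2 / (2*(s - 2*η))) := by
    intro η hη hηs
    obtain ⟨c, hc⟩ : ∃ c : ℝ, c = s/2 - η := ⟨_, rfl⟩
    have hc0 : 0 < c := by rw [hc]; linarith
    have hev1 : ∀ᶠ θ in nhdsWithin (0:ℝ) (Set.Ioi 0), s/2 - η < Real.log (g θ)/θ^2 :=
      hL.eventually_const_lt (by linarith)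
    have hc4 : 4*c = 2*(s-2*η) := by rw [hc]; ring
    obtain ⟨r, hr, hsub⟩ := mem_nhdsGT_iff_exists_Ioo_subset.1 hev1
    have hr0 : (0:ℝ) < r := hr
    obtain ⟨θ₁, hθ₁⟩ : ∃ t : ℝ, t = min (r/2) (ε/2) := ⟨_, rfl⟩
    have hθ₁0 : 0 < θ₁ := hθ₁ ▸ lt_min (by linarith) (by linarith)
    have hθ₁ε : θ₁ < ε := hθ₁ ▸ lt_of_le_of_lt (min_le_right _ _) (by linarith)
    have hθ₁r : θ₁ < r := hθ₁ ▸ lt_of_le_of_lt (min_le_left _ _) (by linarith)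
    have hquad : ∀ θ : ℝ, 0 < θ → θ ≤ θ₁ → c * θ^2 ≤ Real.log (g θ) := by
      intro θ hθpos hθle
      have hmem : θ ∈ Set.Ioo (0:ℝ) r := ⟨hθpos, lt_of_le_of_lt hθle hθ₁r⟩
      have h9 : s/2 - η < Real.log (g θ)/θ^2 := hsub hmem
      have hθ2 : (0:ℝ) < θ^2 := pow_pos hθpos 2
      rw [lt_div_iff₀ hθ2] at h9
      rw [hc]; linarith
    have hLθ₁ : c * θ₁^2 ≤ Real.log (g θ₁) := hquad θ₁ hθ₁0 (le_refl _)
    have hs2η : 0 < s - 2*η := by linarith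
    filter_upwards [Ioo_mem_nhdsGT_of_mem
      (Set.mem_Ico.2 ⟨le_refl (0:ℝ), mul_pos hc0 hθ₁0⟩)] with d hd
    obtain ⟨hd0, hdlt⟩ := hd
    have hub : ∀ x ∈ S d, x ≤ d^2/(2*(s - 2*η)) := by
      rintro x ⟨θ, hθ0, hθint, rfl⟩
      have hgθ : (∫ ω, Real.exp (-θ * U ω) ∂μ) = g θ := rfl
      rw [hgθ]
      rcases eq_or_lt_of_le hθ0 with hθeq | hθpos
      · rw [← hθeq]
        rw [show (0:ℝ) * d - Real.log (g 0) = 0 by rw [hg0]; simp]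
        positivity
      rcases le_or_gt θ θ₁ with hle | hgt
      · have h1 := hquad θ hθpos hle
        have h2 : θ*d - c*θ^2 ≤ d^2/(4*c) := by
          rw [le_div_iff₀ (by linarith : (0:ℝ) < 4*c)]
          nlinarith [sq_nonneg (d - 2*c*θ)]
        rw [← hc4]
        linarith
      · have h1 := hLya θ₁ θ hθ₁0 hgt.le hθint
          (hg_int θ₁ (by rw [abs_of_pos hθ₁0]; exact hθ₁ε))
        have h2 : θ * (c * θ₁) ≤ θ/θ₁ * Real.log (g θ₁) := by
          calc θ * (c * θ₁) = θ/θ₁ * (c * θ₁^2) := by field_simp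
            _ ≤ θ/θ₁ * Real.log (g θ₁) :=
              mul_le_mul_of_nonneg_left hLθ₁ (le_of_lt (div_pos hθpos hθ₁0))
        have h5 : θ*d - Real.log (g θ) ≤ θ*d - θ*(c*θ₁) := by linarith
        have h6 : θ*d - θ*(c*θ₁) ≤ 0 := by nlinarith
        have h7 : (0:ℝ) ≤ d^2/(2*(s-2*η)) := by positivity
        linarith
    refine ⟨hd0, ⟨_, hub⟩, ?_⟩
    rw [hIL d]
    exact Real.sSup_le hub (by positivity)
  -- lower bound function
  have hlow : ∀ᶠ d in nhdsWithin (0:ℝ) (Set.Ioi 0),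
      (d^2/s - Real.log (g (d/s))) ∈ S d := by
    filter_upwards [Ioo_mem_nhdsGT_of_mem
      (Set.mem_Ico.2 ⟨le_refl (0:ℝ), mul_pos hs0 hε⟩)] with d hd
    obtain ⟨hd0, hdlt⟩ := hd
    have hds : |d/s| < ε := by
      rw [abs_of_pos (by positivity), div_lt_iff₀ hs0]
      linarith [hdlt]
    refine ⟨d/s, by positivity, hg_int (d/s) hds, ?_⟩
    have hgθ : (∫ ω, Real.exp (-(d/s) * U ω) ∂μ) = g (d/s) := rfl
    rw [hgθ, show (d/s)*d = d^2/s by field_simp]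
  have hφ : Tendsto (fun d => (d^2/s - Real.log (g (d/s))) / d^2)
      (nhdsWithin (0:ℝ) (Set.Ioi 0)) (nhds (1/(2*s))) := by
    have hcomp : Tendsto (fun d : ℝ => d/s) (nhdsWithin (0:ℝ) (Set.Ioi 0))
        (nhdsWithin (0:ℝ) (Set.Ioi 0)) := by
      apply tendsto_nhdsWithin_of_tendsto_nhds_of_eventually_within
      · have := (continuous_id.div_const s).tendsto (0:ℝ)
        simp only [id_eq, zero_div] at this
        exact this.mono_left nhdsWithin_le_nhds
      · filter_upwards [self_mem_nhdsWithin] with d hd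
        exact div_pos hd hs0
    have h1 : Tendsto (fun d => Real.log (g (d/s))/(d/s)^2)
        (nhdsWithin (0:ℝ) (Set.Ioi 0)) (nhds (s/2)) := hL.comp hcomp
    have h2 : Tendsto (fun d => 1/s - (Real.log (g (d/s))/(d/s)^2) * (1/s^2))
        (nhdsWithin (0:ℝ) (Set.Ioi 0)) (nhds (1/s - (s/2)*(1/s^2))) :=
      tendsto_const_nhds.sub (h1.mul tendsto_const_nhds)
    have h3 : (1/s - (s/2)*(1/s^2)) = 1/(2*s) := by
      field_simp; ring
    rw [h3] at h2
    refine Tendsto.congr' ?_ h2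
    filter_upwards [self_mem_nhdsWithin] with d hd
    have hd0 : (d:ℝ) ≠ 0 := ne_of_gt hd
    field_simp
  -- final assembly
  refine tendsto_order.2 ⟨?_, ?_⟩
  · intro a ha
    have h1 : ∀ᶠ d in nhdsWithin (0:ℝ) (Set.Ioi 0),
        a < (d^2/s - Real.log (g (d/s))) / d^2 := hφ.eventually_const_lt ha
    filter_upwards [h1, hlow, hkey (s/8) (by linarith) (by linarith)] with d h1d h2d h3d
    obtain ⟨hd0, hbdd, _⟩ := h3d
    have : (d^2/s - Real.log (g (d/s))) ≤ IL d := by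
      rw [hIL d]; exact le_csSup hbdd h2d
    have hd2 : (0:ℝ) < d^2 := by positivity
    calc a < (d^2/s - Real.log (g (d/s))) / d^2 := h1d
      _ ≤ IL d / d^2 := by gcongr
  · intro b hb
    have hb0 : (0:ℝ) < b := lt_trans (by positivity) hb
    have hbs : 1/(2*b) < s := by
      rw [div_lt_iff₀ (by positivity)]
      have := (div_lt_iff₀ (by positivity : (0:ℝ) < 2*s)).1 hb
      nlinarith
    obtain ⟨η, hη⟩ : ∃ e : ℝ, e = min (s/8) ((s - 1/(2*b))/4) := ⟨_, rfl⟩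
    have hη0 : 0 < η := hη ▸ lt_min (by linarith) (by linarith)
    have hηs : η < s/4 := hη ▸ lt_of_le_of_lt (min_le_left _ _) (by linarith)
    have hkb : 1/(2*(s - 2*η)) < b := by
      have h1 : η ≤ (s - 1/(2*b))/4 := hη ▸ min_le_right _ _
      have h2 : 1/(2*b) < s - 2*η := by nlinarith
      rw [div_lt_iff₀ (by nlinarith)]
      have h4 : (2*b) * (1/(2*b)) = 1 := mul_one_div_cancel (by positivity : (0:ℝ) < 2*b).ne'
      nlinarith [mul_lt_mul_of_pos_left h2 (by positivity : (0:ℝ) < 2*b)]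
    filter_upwards [hkey η hη0 hηs] with d hd
    obtain ⟨hd0, _, hle⟩ := hd
    have hd2 : (0:ℝ) < d^2 := by positivity
    calc IL d / d^2 ≤ (d^2/(2*(s-2*η)))/d^2 := by gcongr
      _ = 1/(2*(s-2*η)) := by
          rw [div_right_comm, div_self (ne_of_gt hd2)]
      _ < b := hkb
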